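/- Let X be a topological space with a countable network and weight strictly less than 𝔟. Then X is H-nw-selective if and only if |X| < 𝔟. -/

import Mathlib

open Set Filter Topology TopologicalSpace

def IsNetwork (X : Type) [TopologicalSpace X] (N : Set (Set X)) : Prop :=
  ∀ (x : X) (U : Set X), IsOpen U → x ∈ U → ∃ A ∈ N, x ∈ A ∧ A ⊆ U

def IsNetworkAt (X : Type) [TopologicalSpace X] (N : Set (Set X)) (x : X) : Prop :=
  ∀ U : Set X, IsOpen U → x ∈ U → ∃ A ∈ N, x ∈ A ∧ A ⊆ U

def HasCountableNetwork (X : Type) [TopologicalSpace X] : Prop :=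
  ∃ N : Set (Set X), N.Countable ∧ IsNetwork X N

def MNwSelective (X : Type) [TopologicalSpace X] : Prop :=
  HasCountableNetwork X ∧
  ∀ N : ℕ → Set (Set X), (∀ n, (N n).Countable ∧ IsNetwork X (N n)) →
    ∃ F : ℕ → Set (Set X), (∀ n, F n ⊆ N n ∧ (F n).Finite) ∧
      IsNetwork X (⋃ n, F n)

def RNwSelective (X : Type) [TopologicalSpace X] : Prop :=
  HasCountableNetwork X ∧
  ∀ N : ℕ → Set (Set X), (∀ n, (N n).Countable ∧ IsNetwork X (N n)) →
    ∃ s : ℕ → Set X, (∀ n, s n ∈ N n) ∧ IsNetwork X (Set.range s)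

def HNwSelective (X : Type) [TopologicalSpace X] : Prop :=
  HasCountableNetwork X ∧
  ∀ N : ℕ → Set (Set X), (∀ n, (N n).Countable ∧ IsNetwork X (N n)) →
    ∃ F : ℕ → Set (Set X), (∀ n, F n ⊆ N n ∧ (F n).Finite) ∧
      ∀ (x : X) (U : Set X), IsOpen U → x ∈ U →
        ∃ k : ℕ, ∀ n ≥ k, ∃ A ∈ F n, x ∈ A ∧ A ⊆ U

noncomputable def dominatingNumber : Cardinal :=
  sInf {c | ∃ D : Set (ℕ → ℕ), Cardinal.mk D = c ∧
    ∀ g : ℕ → ℕ, ∃ f ∈ D, ∀ᶠ n in atTop, g n ≤ f n}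

noncomputable def boundingNumber : Cardinal :=
  sInf {c | ∃ B : Set (ℕ → ℕ), Cardinal.mk B = c ∧
    ∀ g : ℕ → ℕ, ∃ f ∈ B, ¬ (∀ᶠ n in atTop, f n ≤ g n)}

noncomputable def covMeager : Cardinal :=
  sInf {c | ∃ S : Set (Set ℝ), Cardinal.mk S = c ∧ (∀ s ∈ S, IsMeagre s) ∧ ⋃₀ S = Set.univ}

noncomputable def weight' (X : Type) [TopologicalSpace X] : Cardinal :=
  sInf {c | ∃ B : Set (Set X), Cardinal.mk B = c ∧ TopologicalSpace.IsTopologicalBasis B}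



-- Auxiliary lemmas

private def stmt7.bSet : Set Cardinal := {c | ∃ B : Set (ℕ → ℕ), Cardinal.mk B = c ∧
    ∀ g : ℕ → ℕ, ∃ f ∈ B, ¬ (∀ᶠ n in atTop, f n ≤ g n)}

private lemma stmt7.bSet_nonempty : stmt7.bSet.Nonempty := by
  refine ⟨_, (univ : Set (ℕ → ℕ)), rfl, fun g => ⟨fun n => g n + 1, mem_univ _, ?_⟩⟩
  simp only [eventually_atTop, not_exists]
  intro k h
  exact absurd (h k le_rfl) (by omega)

private lemma stmt7.aleph0_le_bounding : Cardinal.aleph0 ≤ boundingNumber := by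
  apply le_csInf stmt7.bSet_nonempty
  rintro c ⟨B, rfl, hB⟩
  by_contra hlt
  push_neg at hlt
  have hfin : B.Finite := Cardinal.lt_aleph0_iff_set_finite.1 hlt
  obtain ⟨f, hf, hne⟩ := hB (fun n => hfin.toFinset.sup (fun f => f n))
  exact hne (Eventually.of_forall (fun n =>
    Finset.le_sup (f := fun f => f n) (hfin.mem_toFinset.2 hf)))

private lemma stmt7.bounded_of_lt_bounding (D : Set (ℕ → ℕ))
    (hD : Cardinal.mk D < boundingNumber) :
    ∃ g : ℕ → ℕ, ∀ f ∈ D, ∀ᶠ n in atTop, f n ≤ g n := by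
  by_contra h
  push_neg at h
  have : Cardinal.mk D ∈ stmt7.bSet := ⟨D, rfl, fun g => by
    obtain ⟨f, hf, hfr⟩ := h g
    exact ⟨f, hf, by rw [Filter.not_eventually]; simpa only [not_le] using hfr⟩⟩
  exact absurd (csInf_le (OrderBot.bddBelow _) this) (not_le.2 hD)

private lemma stmt7.exists_unbounded : ∃ B : Set (ℕ → ℕ),
    Cardinal.mk B = boundingNumber ∧
    ∀ g : ℕ → ℕ, ∃ f ∈ B, ¬ (∀ᶠ n in atTop, f n ≤ g n) :=
  csInf_mem stmt7.bSet_nonempty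

private lemma stmt7.weight_basis (X : Type) [TopologicalSpace X] :
    ∃ B : Set (Set X), Cardinal.mk B = weight' X ∧ TopologicalSpace.IsTopologicalBasis B := by
  have h : {c | ∃ B : Set (Set X), Cardinal.mk B = c ∧
      TopologicalSpace.IsTopologicalBasis B}.Nonempty :=
    ⟨_, {s : Set X | IsOpen s}, rfl, isTopologicalBasis_opens⟩
  exact csInf_mem h

private lemma stmt7.backward (X : Type) [TopologicalSpace X]
    (h1 : HasCountableNetwork X)
    (h3 : weight' X < boundingNumber)
    (hX : Cardinal.mk X < boundingNumber) : HNwSelective X := by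
  refine ⟨h1, ?_⟩
  intro N hN
  rcases isEmpty_or_nonempty X with hE | hE
  · exact ⟨fun _ => ∅, fun n => ⟨empty_subset _, finite_empty⟩,
      fun x => (IsEmpty.false x).elim⟩
  · obtain ⟨𝔅, h𝔅c, h𝔅⟩ := stmt7.weight_basis X
    have hne : ∀ n, (N n).Nonempty := by
      intro n
      obtain ⟨x⟩ := hE
      obtain ⟨A, hA, _⟩ := (hN n).2 x univ isOpen_univ (mem_univ x)
      exact ⟨A, hA⟩
    choose e he using fun n => Set.Countable.exists_eq_range (hN n).1 (hne n)
    set I : Set (X × Set X) := {p | p.1 ∈ p.2 ∧ p.2 ∈ 𝔅} with hI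
    have choice_k : ∀ p : I, ∀ n : ℕ, ∃ k : ℕ, p.1.1 ∈ e n k ∧ e n k ⊆ p.1.2 := by
      rintro ⟨⟨x, B⟩, hxB, hB𝔅⟩ n
      obtain ⟨A, hA, hxA, hAB⟩ := (hN n).2 x B (h𝔅.isOpen hB𝔅) hxB
      rw [he n] at hA
      obtain ⟨k, hk⟩ := hA
      exact ⟨k, hk ▸ hxA, hk ▸ hAB⟩
    choose gi hgi1 hgi2 using choice_k
    have hDlt : Cardinal.mk (range gi) < boundingNumber := by
      refine lt_of_le_of_lt (Cardinal.mk_range_le) ?_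
      have : Cardinal.mk I ≤ Cardinal.mk X * Cardinal.mk 𝔅 := by
        refine le_trans (Cardinal.mk_le_mk_of_subset (by intro p hp; exact ⟨mem_univ _, hp.2⟩ :
          I ⊆ (univ : Set X) ×ˢ 𝔅)) ?_
        rw [Cardinal.mk_setProd, Cardinal.mk_univ]
      refine lt_of_le_of_lt this ?_
      exact Cardinal.mul_lt_of_lt stmt7.aleph0_le_bounding hX (h𝔅c ▸ h3)
    obtain ⟨g, hg⟩ := stmt7.bounded_of_lt_bounding _ hDlt
    refine ⟨fun n => (e n) '' (Set.Iic (g n)), fun n => ⟨?_, ?_⟩, ?_⟩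
    · rw [he n]; exact image_subset_range _ _
    · exact (Set.finite_Iic _).image _
    · intro x U hU hxU
      obtain ⟨B, hB𝔅, hxB, hBU⟩ := h𝔅.exists_subset_of_mem_open hxU hU
      set p : I := ⟨(x, B), hxB, hB𝔅⟩ with hp
      have := hg (gi p) (mem_range_self p)
      rw [eventually_atTop] at this
      obtain ⟨k, hk⟩ := this
      exact ⟨k, fun n hn => ⟨e n (gi p n), ⟨gi p n, hk n hn, rfl⟩,
        hgi1 p n, (hgi2 p n).trans hBU⟩⟩

private lemma stmt7.forward (X : Type) [TopologicalSpace X]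
    (h : HNwSelective X) : Cardinal.mk X < boundingNumber := by
  by_contra hb
  push_neg at hb
  obtain ⟨B₀, hB₀c, hB₀u⟩ := stmt7.exists_unbounded
  have hle : Cardinal.mk B₀ ≤ Cardinal.mk X := hB₀c ▸ hb
  obtain ⟨φ⟩ := (Cardinal.le_def _ _).1 hle
  have hXinf : Cardinal.aleph0 ≤ Cardinal.mk X := le_trans stmt7.aleph0_le_bounding hb
  have hXne : Nonempty X := Cardinal.mk_ne_zero_iff.1 (by
    intro h0
    rw [h0] at hXinf
    exact Cardinal.aleph0_ne_zero (le_antisymm hXinf zero_le))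
  obtain ⟨M, hMc, hMn⟩ := h.1
  have hMne : M.Nonempty := by
    obtain ⟨x⟩ := hXne
    obtain ⟨A, hA, _⟩ := hMn x univ isOpen_univ (mem_univ x)
    exact ⟨A, hA⟩
  obtain ⟨m, hm⟩ := Set.Countable.exists_eq_range hMc hMne
  set S : ℕ → ℕ → Set X := fun n j => φ '' {f : B₀ | j ≤ (f : ℕ → ℕ) n} with hS
  set N : ℕ → Set (Set X) := fun n => range (fun p : ℕ × ℕ => m p.1 \ S n p.2) with hNdef
  have hNc : ∀ n, (N n).Countable := fun n => countable_range _
  have hNn : ∀ n, IsNetwork X (N n) := by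
    intro n x U hU hxU
    obtain ⟨A, hA, hxA, hAU⟩ := hMn x U hU hxU
    rw [hm] at hA
    obtain ⟨k, hk⟩ := hA
    by_cases hx : ∃ f : B₀, φ f = x
    · obtain ⟨f, hf⟩ := hx
      refine ⟨m k \ S n ((f : ℕ → ℕ) n + 1), ⟨(k, (f : ℕ → ℕ) n + 1), rfl⟩, ⟨hk ▸ hxA, ?_⟩,
        (diff_subset).trans (hk ▸ hAU)⟩
      rintro ⟨f', hf', hff⟩
      have : f' = f := φ.injective (hff.trans hf.symm)
      subst this
      simp at hf'
    · refine ⟨m k \ S n 0, ⟨(k, 0), rfl⟩, ⟨hk ▸ hxA, ?_⟩, (diff_subset).trans (hk ▸ hAU)⟩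
      rintro ⟨f', _, hff⟩
      exact hx ⟨f', hff⟩
  obtain ⟨F, hF, hFh⟩ := h.2 N (fun n => ⟨hNc n, hNn n⟩)
  classical
  have idx : ∀ n, ∀ A ∈ F n, ∃ p : ℕ × ℕ, A = m p.1 \ S n p.2 := by
    intro n A hA
    obtain ⟨p, hp⟩ := (hF n).1 hA
    exact ⟨p, hp.symm⟩
  set jdx : ℕ → Set X → ℕ := fun n A =>
    if h : ∃ p : ℕ × ℕ, A = m p.1 \ S n p.2 then (Classical.choose h).2 else 0 with hjdx
  set g : ℕ → ℕ := fun n => (hF n).2.toFinset.sup (jdx n) with hg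
  obtain ⟨f, hfB, hfu⟩ := hB₀u g
  obtain ⟨k₀, hk₀⟩ := hFh (φ ⟨f, hfB⟩) univ isOpen_univ (mem_univ _)
  apply hfu
  rw [eventually_atTop]
  refine ⟨k₀, fun n hn => ?_⟩
  by_contra hgn
  push_neg at hgn
  obtain ⟨A, hAF, hxA, _⟩ := hk₀ n hn
  have hex : ∃ p : ℕ × ℕ, A = m p.1 \ S n p.2 := idx n A hAF
  obtain hp := Classical.choose_spec hex
  have hj : jdx n A = (Classical.choose hex).2 := by rw [hjdx]; simp [hex]
  have hjg : jdx n A ≤ g n := Finset.le_sup ((hF n).2.mem_toFinset.2 hAF)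
  rw [hp] at hxA
  exact hxA.2 ⟨⟨f, hfB⟩, by simp only [mem_setOf_eq]; omega, rfl⟩

theorem stmt7 (X : Type) [TopologicalSpace X]
    (h1 : HasCountableNetwork X)
    (h3 : weight' X < boundingNumber) :
    HNwSelective X ↔ Cardinal.mk X < boundingNumber :=
  ⟨fun h => stmt7.forward X h, fun h => stmt7.backward X h1 h3 h⟩
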